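/- Let κ ≥ 0 and ξ ∈ ℝ, and consider the vector fields δ̃(z) := 2/z + κ + 2ξ·z and σ̃(z) := -√κ·(1 + 2z) on ℍ. Then: (a) for every h ∈ ℝ, Re( σ̃(-1/2 + ih) ) = 0; (b) for every h > 0, Re( δ̃(-1/2 + ih) ) = -1/(h² + 1/4) + κ - ξ; and (c) Re( δ̃(-1/2 + ih) ) < 0 for all h > 0 if and only if ξ ≥ κ. Consequently, the half-plane region {z ∈ ℍ : Re z > -1/2} is invariant under the (δ̃,σ̃)-SLE flow exactly when ξ ≥ κ. -/
import Mathlib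

open Complex

/-- The half-plane region `{Re z > -1/2}` is invariant under the (δ̃,σ̃)-SLE
flow (with the fixed boundary point moved to infinity) exactly when ξ ≥ κ. -/
theorem invariant_region_iff (κ ξ : ℝ) (hκ : 0 ≤ κ)
    (δt σt : ℂ → ℂ)
    (hδt : ∀ z, δt z = 2 / z + (κ : ℂ) + 2 * (ξ : ℂ) * z)
    (hσt : ∀ z, σt z = -(Real.sqrt κ : ℂ) * (1 + 2 * z)) :
    (∀ h : ℝ, (σt ((-1 / 2 : ℂ) + (h : ℂ) * Complex.I)).re = 0)
    ∧ (∀ h : ℝ, 0 < h →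
        (δt ((-1 / 2 : ℂ) + (h : ℂ) * Complex.I)).re = -1 / (h ^ 2 + 1 / 4) + κ - ξ)
    ∧ ((∀ h : ℝ, 0 < h → (δt ((-1 / 2 : ℂ) + (h : ℂ) * Complex.I)).re < 0) ↔ ξ ≥ κ) := by
  have key : ∀ h : ℝ, 0 < h →
      (δt ((-1 / 2 : ℂ) + (h : ℂ) * Complex.I)).re = -1 / (h ^ 2 + 1 / 4) + κ - ξ := by
    intro h hh
    have hd : h ^ 2 + 1 / 4 > 0 := by positivity
    rw [hδt]
    simp [Complex.add_re, Complex.div_re, Complex.normSq_apply]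
    field_simp
    ring
  refine ⟨?_, key, ?_⟩
  · intro h
    rw [hσt]
    simp
    right; norm_num
  · constructor
    · intro hall
      by_contra hlt
      push_neg at hlt
      have hk : 0 < κ - ξ := by linarith
      set h := Real.sqrt (1 / (κ - ξ)) with hdef
      have hh : 0 < h := Real.sqrt_pos.mpr (by positivity)
      have hsq : h ^ 2 = 1 / (κ - ξ) := Real.sq_sqrt (by positivity)
      have h2 : -1 / (h ^ 2 + 1 / 4) + κ - ξ < 0 := by
        rw [← key h hh]; exact hall h hh
      have hd : (0:ℝ) < h ^ 2 + 1 / 4 := by positivity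
      have h3 : 1 / (κ - ξ) < h ^ 2 + 1 / 4 := by rw [hsq]; linarith
      have h4 : 1 / (h ^ 2 + 1 / 4) < κ - ξ := by
        have := one_div_lt_one_div_of_lt (by positivity) h3
        rwa [one_div_one_div] at this
      have h5 : -1 / (h ^ 2 + 1 / 4) = -(1 / (h ^ 2 + 1 / 4)) := by ring
      linarith [h2, h4, h5.ge, h5.le]
    · intro hge h hh
      rw [key h hh]
      have hd : (0:ℝ) < h ^ 2 + 1 / 4 := by positivity
      have : -1 / (h ^ 2 + 1 / 4) < 0 := by
        apply div_neg_of_neg_of_pos <;> [norm_num; exact hd]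
      linarith
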